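/- Let (X, μ) be a measure space with finite total mass m₀ := μ(X) ∈ (0, ∞), let p be real with 1 < p < 2, and let v : X → ℝ be a function in L^p(μ) with ∫_X v dμ = 0. Then ∫_X |1 + v|^p dμ ≤ m₀ + (1 + p (p−1)^{p−1}) ∫_X |v|^p dμ. -/

import Mathlib

open MeasureTheory Real

lemma aux_tangent {p : ℝ} (hp1 : 1 < p) {s : ℝ} (hs : 0 ≤ s) :
    p * s ≤ 1 + p * (p - 1) ^ (p - 1) * s ^ p := by
  have hp0 : (0:ℝ) < p := lt_trans one_pos hp1
  have hq : (0:ℝ) < p - 1 := by linarith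
  set l : ℝ := p ^ (p - 1)⁻¹ * (p - 1) with hl
  have hlpos : 0 < l := mul_pos (Real.rpow_pos_of_pos hp0 _) hq
  -- Bernoulli: (s*l)^p ≥ 1 + p*(s*l - 1)
  have hb := one_add_mul_self_le_rpow_one_add (s := s * l - 1)
    (by nlinarith [mul_nonneg hs hlpos.le]) hp1.le
  rw [add_sub_cancel] at hb
  have hmul : (s * l) ^ p = s ^ p * l ^ p := Real.mul_rpow hs hlpos.le
  have hlp1 : l ^ (p - 1) = p * (p - 1) ^ (p - 1) := by
    rw [hl, Real.mul_rpow (Real.rpow_pos_of_pos hp0 _).le hq.le,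
      ← Real.rpow_mul hp0.le, inv_mul_cancel₀ hq.ne', Real.rpow_one]
  have hlp : l ^ p = p * (p - 1) ^ (p - 1) * l := by
    rw [← hlp1, ← Real.rpow_add_one hlpos.ne', sub_add_cancel]
  -- small term bound : (p-1)/l ≤ 1
  have hsmall : p - 1 ≤ l := by
    rw [hl]
    have : (1:ℝ) ≤ p ^ (p-1)⁻¹ := by
      calc (1:ℝ) = 1 ^ (p-1)⁻¹ := (Real.one_rpow _).symm
      _ ≤ p ^ (p-1)⁻¹ := Real.rpow_le_rpow zero_le_one hp1.le (by positivity)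
    nlinarith
  have hkey : p * s * l ≤ (1 + p * (p - 1) ^ (p - 1) * s ^ p) * l := by
    have : 1 + p * (s * l - 1) ≤ s ^ p * (p * (p - 1) ^ (p - 1) * l) := by
      rw [← hlp, ← hmul]; exact hb
    nlinarith
  exact le_of_mul_le_mul_right (by linarith [hkey]) hlpos

lemma aux_subadd {x y α : ℝ} (hx : 0 ≤ x) (hy : 0 ≤ y) (h0 : 0 ≤ α) (h1 : α ≤ 1) :
    (x + y) ^ α ≤ x ^ α + y ^ α := by
  have h := NNReal.coe_le_coe.2 (NNReal.rpow_add_le_add_rpow x.toNNReal y.toNNReal h0 h1)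
  push_cast [NNReal.coe_rpow, Real.coe_toNNReal _ hx, Real.coe_toNNReal _ hy,
    Real.coe_toNNReal _ (add_nonneg hx hy)] at h
  exact h

lemma aux_caseA {p : ℝ} (hp1 : 1 < p) (hp2 : p ≤ 2) {t : ℝ} (ht : 0 ≤ t) :
    (1 + t) ^ p ≤ 1 + p * t + t ^ p := by
  have hp0 : (0:ℝ) < p := lt_trans one_pos hp1
  set F : ℝ → ℝ := fun t => 1 + p * t + t ^ p - (1 + t) ^ p with hF
  have hrc : Continuous fun x : ℝ => x ^ p :=
    continuous_iff_continuousAt.mpr fun x => Real.continuousAt_rpow_const x p (Or.inr hp0.le)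
  have hcont : ContinuousOn F (Set.Ici 0) := by
    apply Continuous.continuousOn
    exact ((continuous_const.add (continuous_const.mul continuous_id)).add hrc).sub
      (hrc.comp (continuous_const.add continuous_id))
  have hderiv : ∀ x ∈ Set.Ioi (0:ℝ), HasDerivAt F
      (p + (p * x ^ (p - 1) * 1 - p * (1 + x) ^ (p - 1) * 1)) x := by
    intro x hx
    have hx0 : (0:ℝ) < x := hx
    have h1 : HasDerivAt (fun x : ℝ => 1 + p * x) p x := by
      simpa using ((hasDerivAt_id x).const_mul p).const_add 1
    have h2 : HasDerivAt (fun x : ℝ => x ^ p) (p * x ^ (p - 1) * 1) x := by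
      simpa using (Real.hasDerivAt_rpow_const (x := x) (Or.inl hx0.ne'))
    have h3 : HasDerivAt (fun x : ℝ => (1 + x) ^ p) (p * (1 + x) ^ (p - 1) * 1) x :=
      (Real.hasDerivAt_rpow_const (x := 1 + x) (Or.inl (by positivity))).comp x
        (by simpa using (hasDerivAt_id x).const_add 1)
    exact (h1.add h2).sub h3 |>.congr_deriv (by ring)
  have hmono : MonotoneOn F (Set.Ici 0) := by
    apply monotoneOn_of_deriv_nonneg (convex_Ici 0) hcont
    · intro x hx
      rw [interior_Ici] at hx
      exact (hderiv x hx).differentiableAt.differentiableWithinAt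
    · intro x hx
      rw [interior_Ici] at hx
      rw [(hderiv x hx).deriv]
      have hsub : (1 + x) ^ (p - 1) ≤ 1 + x ^ (p - 1) := by
        have := aux_subadd (x := 1) (y := x) (α := p - 1) zero_le_one (le_of_lt hx)
          (by linarith) (by linarith)
        simpa [Real.one_rpow] using this
      nlinarith
  have h0 : F 0 ≤ F t := by
    apply hmono Set.self_mem_Ici ht ht
  have : F 0 = 0 := by
    simp [hF, Real.zero_rpow hp0.ne', Real.one_rpow]
  rw [this] at h0
  simp only [hF] at h0
  linarith

lemma aux_caseB {p : ℝ} (hp1 : 1 < p) (hp2 : p ≤ 2) {s : ℝ} (hs : 0 ≤ s) (hs1 : s ≤ 1) :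
    (1 - s) ^ p ≤ 1 - p * s + s ^ p := by
  have hp0 : (0:ℝ) < p := lt_trans one_pos hp1
  set G : ℝ → ℝ := fun s => 1 - p * s + s ^ p - (1 - s) ^ p with hG
  have hrc : Continuous fun x : ℝ => x ^ p :=
    continuous_iff_continuousAt.mpr fun x => Real.continuousAt_rpow_const x p (Or.inr hp0.le)
  have hcont : ContinuousOn G (Set.Icc 0 1) := by
    apply Continuous.continuousOn
    exact ((continuous_const.sub (continuous_const.mul continuous_id)).add hrc).sub
      (hrc.comp (continuous_const.sub continuous_id))
  have hderiv : ∀ x ∈ Set.Ioo (0:ℝ) 1, HasDerivAt G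
      (-p + (p * x ^ (p - 1) * 1 + p * (1 - x) ^ (p - 1))) x := by
    intro x hx
    have h1 : HasDerivAt (fun x : ℝ => 1 - p * x) (-p) x := by
      simpa using ((hasDerivAt_id x).const_mul p).const_sub 1
    have h2 : HasDerivAt (fun x : ℝ => x ^ p) (p * x ^ (p - 1) * 1) x := by
      simpa using (Real.hasDerivAt_rpow_const (x := x) (Or.inl hx.1.ne'))
    have h3 : HasDerivAt (fun x : ℝ => (1 - x) ^ p) (p * (1 - x) ^ (p - 1) * (-1)) x :=
      (Real.hasDerivAt_rpow_const (x := 1 - x) (Or.inl (by nlinarith [hx.2]))).comp x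
        (by simpa using (hasDerivAt_id x).const_sub 1)
    exact (h1.add h2).sub h3 |>.congr_deriv (by ring)
  have hmono : MonotoneOn G (Set.Icc 0 1) := by
    apply monotoneOn_of_deriv_nonneg (convex_Icc 0 1) hcont
    · intro x hx
      rw [interior_Icc] at hx
      exact (hderiv x hx).differentiableAt.differentiableWithinAt
    · intro x hx
      rw [interior_Icc] at hx
      rw [(hderiv x hx).deriv]
      have hsub : (1:ℝ) ≤ x ^ (p - 1) + (1 - x) ^ (p - 1) := by
        have := aux_subadd (x := x) (y := 1 - x) (α := p - 1) hx.1.le (by linarith [hx.2])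
          (by linarith) (by linarith)
        simpa [Real.one_rpow] using this
      nlinarith
  have h0 : G 0 ≤ G s := hmono (Set.left_mem_Icc.2 zero_le_one) ⟨hs, hs1⟩ hs
  have : G 0 = 0 := by
    simp [hG, Real.zero_rpow hp0.ne', Real.one_rpow]
  rw [this] at h0
  simp only [hG] at h0
  linarith
lemma aux_ptwise {p : ℝ} (hp1 : 1 < p) (hp2 : p < 2) (t : ℝ) :
    |1 + t| ^ p ≤ 1 + p * t + (1 + p * (p - 1) ^ (p - 1)) * |t| ^ p := by
  have hp0 : (0:ℝ) < p := lt_trans one_pos hp1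
  have hc : 0 ≤ p * (p - 1) ^ (p - 1) :=
    mul_nonneg hp0.le (Real.rpow_nonneg (by linarith) _)
  rcases le_or_gt 0 t with ht | ht
  · rw [abs_of_nonneg (by linarith), abs_of_nonneg ht]
    have h1 := aux_caseA hp1 hp2.le ht
    have h2 : 0 ≤ t ^ p := Real.rpow_nonneg ht _
    nlinarith
  · rcases le_or_gt (-1) t with ht1 | ht1
    · rw [abs_of_nonneg (by linarith), abs_of_neg ht]
      have h1 := aux_caseB hp1 hp2.le (s := -t) (by linarith) (by linarith)
      have h2 : 0 ≤ (-t) ^ p := Real.rpow_nonneg (by linarith) _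
      rw [show 1 + t = 1 - -t by ring] at *
      nlinarith
    · rw [abs_of_neg (by linarith), abs_of_neg ht]
      have h1 : (-(1 + t)) ^ p ≤ (-t) ^ p :=
        Real.rpow_le_rpow (by linarith) (by linarith) hp0.le
      have h2 := aux_tangent hp1 (s := -t) (by linarith)
      nlinarith

theorem stmt_11 {X : Type*} [MeasurableSpace X] (μ : Measure X)
    [IsFiniteMeasure μ] (m₀ : ℝ) (hm₀ : m₀ = (μ Set.univ).toReal)
    (hm₀pos : 0 < m₀) (p : ℝ) (hp1 : 1 < p) (hp2 : p < 2) (v : X → ℝ)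
    (hv : MemLp v (ENNReal.ofReal p) μ)
    (hmean : ∫ x, v x ∂μ = 0) :
    ∫ x, |1 + v x| ^ p ∂μ ≤
      m₀ + (1 + p * (p - 1) ^ (p - 1)) * ∫ x, |v x| ^ p ∂μ := by
  have hp0 : (0:ℝ) < p := lt_trans one_pos hp1
  have hpt : (ENNReal.ofReal p).toReal = p := ENNReal.toReal_ofReal hp0.le
  have hpne0 : ENNReal.ofReal p ≠ 0 := by
    simp [ENNReal.ofReal_eq_zero, not_le, hp0]
  have hpne : ENNReal.ofReal p ≠ ⊤ := ENNReal.ofReal_ne_top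
  set C : ℝ := 1 + p * (p - 1) ^ (p - 1) with hC
  -- integrability facts
  have hvint : Integrable v μ := by
    refine hv.integrable ?_
    rw [← ENNReal.ofReal_one]
    exact ENNReal.ofReal_le_ofReal hp1.le
  have h2 : Integrable (fun x => |v x| ^ p) μ := by
    have := hv.integrable_norm_rpow hpne0 hpne
    simpa [hpt, Real.norm_eq_abs] using this
  have h1 : Integrable (fun x => |1 + v x| ^ p) μ := by
    have hv' : MemLp (fun x => 1 + v x) (ENNReal.ofReal p) μ :=
      (memLp_const (1:ℝ)).add hv
    have := hv'.integrable_norm_rpow hpne0 hpne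
    simpa [hpt, Real.norm_eq_abs] using this
  have hRHS : Integrable (fun x => 1 + p * v x + C * |v x| ^ p) μ :=
    ((integrable_const 1).add (hvint.const_mul p)).add (h2.const_mul C)
  have hmono : ∫ x, |1 + v x| ^ p ∂μ ≤ ∫ x, (1 + p * v x + C * |v x| ^ p) ∂μ :=
    integral_mono h1 hRHS fun x => aux_ptwise hp1 hp2 (v x)
  have hcalc : ∫ x, (1 + p * v x + C * |v x| ^ p) ∂μ
      = m₀ + C * ∫ x, |v x| ^ p ∂μ := by
    have e1 : ∫ x, (1 + p * v x + C * |v x| ^ p) ∂μ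
        = (∫ x, (1 + p * v x) ∂μ) + ∫ x, C * |v x| ^ p ∂μ :=
      integral_add ((integrable_const 1).add (hvint.const_mul p)) (h2.const_mul C)
    have e2 : ∫ x, (1 + p * v x) ∂μ = (∫ _x, (1:ℝ) ∂μ) + ∫ x, p * v x ∂μ :=
      integral_add (integrable_const 1) (hvint.const_mul p)
    rw [e1, e2, integral_const, integral_const_mul, integral_const_mul, hmean, hm₀]
    simp [Measure.real]
  rw [hcalc] at hmono
  exact hmono
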